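/- The conic Q: 4X_0^2 - X_1^2 + 2X_1X_3 + 3X_3^2 = 0 (as a quadric in P^3 together with the cubic F = X_0^3+X_1^3+X_2^3+X_0^2X_3+X_1X_3^2+X_3^3) defines a curve R_2 = {F = 0} ∩ {Q = 0} in P^3 that is smooth: at every common zero of F and Q over an algebraically closed field of characteristic zero, the Jacobian matrix of (F, Q) has rank 2. -/

import Mathlib

/-- The curve `R₂ = {F = 0} ∩ {Q = 0}` in `ℙ³`, where
`F = X₀³+X₁³+X₂³+X₀²X₃+X₁X₃²+X₃³` and `Q = 4X₀² - X₁² + 2X₁X₃ + 3X₃²`, is a smooth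
complete intersection: at every nonzero common zero of `F` and `Q` over an
algebraically closed field of characteristic zero, the 2×4 Jacobian matrix of
`(F, Q)` has rank 2. -/
theorem branch_curve_smooth {k : Type*} [Field k] [IsAlgClosed k] [CharZero k]
    (x₀ x₁ x₂ x₃ : k) (hx : ¬ (x₀ = 0 ∧ x₁ = 0 ∧ x₂ = 0 ∧ x₃ = 0))
    (hF : x₀ ^ 3 + x₁ ^ 3 + x₂ ^ 3 + x₀ ^ 2 * x₃ + x₁ * x₃ ^ 2 + x₃ ^ 3 = 0)
    (hQ : 4 * x₀ ^ 2 - x₁ ^ 2 + 2 * x₁ * x₃ + 3 * x₃ ^ 2 = 0) :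
    Matrix.rank
      !![3 * x₀ ^ 2 + 2 * x₀ * x₃, 3 * x₁ ^ 2 + x₃ ^ 2, 3 * x₂ ^ 2,
           x₀ ^ 2 + 2 * x₁ * x₃ + 3 * x₃ ^ 2;
         8 * x₀, -2 * x₁ + 2 * x₃, 0, 2 * x₁ + 6 * x₃] = 2 := by
  have hli : LinearIndependent k
      ![(![3 * x₀ ^ 2 + 2 * x₀ * x₃, 3 * x₁ ^ 2 + x₃ ^ 2, 3 * x₂ ^ 2,
           x₀ ^ 2 + 2 * x₁ * x₃ + 3 * x₃ ^ 2] : Fin 4 → k),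
        ![8 * x₀, -2 * x₁ + 2 * x₃, 0, 2 * x₁ + 6 * x₃]] := by
    rw [linearIndependent_fin2]
    constructor
    · intro h0
      have e0 := congrFun h0 0
      have e1 := congrFun h0 1
      have e3 := congrFun h0 3
      simp only [Matrix.cons_val_zero, Matrix.cons_val_one, Matrix.head_cons,
        Matrix.cons_val_three, Matrix.tail_cons, Pi.zero_apply] at e0 e1 e3
      have hx₀ : x₀ = 0 := by linear_combination (1/8 : k) * e0
      have hx₃ : x₃ = 0 := by linear_combination (1/8 : k) * e1 + (1/8 : k) * e3
      have hx₁ : x₁ = 0 := by linear_combination (1/2 : k) * e3 - 3 * hx₃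
      have hx₂3 : x₂ ^ 3 = 0 := by
        linear_combination hF - x₀ ^ 2 * hx₀ - (x₁ ^ 2 + x₃ ^ 2) * hx₁ -
          (x₀ ^ 2 + x₃ ^ 2) * hx₃
      have hx₂ : x₂ = 0 := by
        exact pow_eq_zero_iff (by norm_num : (3 : ℕ) ≠ 0) |>.mp hx₂3
      exact hx ⟨hx₀, hx₁, hx₂, hx₃⟩
    · intro a ha
      have e0 := congrFun ha 0
      have e1 := congrFun ha 1
      have e2 := congrFun ha 2
      have e3 := congrFun ha 3
      simp only [Matrix.cons_val_zero, Matrix.cons_val_one, Matrix.head_cons,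
        Matrix.cons_val_two, Matrix.cons_val_three, Matrix.tail_cons,
        Pi.smul_apply, smul_eq_mul] at e0 e1 e2 e3
      -- `x₂ = 0` from the third column
      have hx₂2 : x₂ ^ 2 = 0 := by linear_combination (-1/3 : k) * e2
      have hx₂ : x₂ = 0 := pow_eq_zero_iff (by norm_num : (2 : ℕ) ≠ 0) |>.mp hx₂2
      -- the 2×2 minors all vanish
      have hm01 : (3 * x₀ ^ 2 + 2 * x₀ * x₃) * (-2 * x₁ + 2 * x₃)
          - (3 * x₁ ^ 2 + x₃ ^ 2) * (8 * x₀) = 0 := by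
        linear_combination (2 * x₁ - 2 * x₃) * e0 + (8 * x₀) * e1
      have hm03 : (3 * x₀ ^ 2 + 2 * x₀ * x₃) * (2 * x₁ + 6 * x₃)
          - (x₀ ^ 2 + 2 * x₁ * x₃ + 3 * x₃ ^ 2) * (8 * x₀) = 0 := by
        linear_combination (-2 * x₁ - 6 * x₃) * e0 + (8 * x₀) * e3
      have hm13 : (3 * x₁ ^ 2 + x₃ ^ 2) * (2 * x₁ + 6 * x₃)
          - (x₀ ^ 2 + 2 * x₁ * x₃ + 3 * x₃ ^ 2) * (-2 * x₁ + 2 * x₃) = 0 := by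
        linear_combination (-2 * x₁ - 6 * x₃) * e1 + (-2 * x₁ + 2 * x₃) * e3
      -- eliminate `x₂` from `F`
      have hF2 : x₀ ^ 3 + x₁ ^ 3 + x₀ ^ 2 * x₃ + x₁ * x₃ ^ 2 + x₃ ^ 3 = 0 := by
        linear_combination hF - x₂ ^ 2 * hx₂
      -- Nullstellensatz certificates
      have hx₀5 : x₀ ^ 5 = 0 := by
        linear_combination
          ((-7874825/18732087 : k) * x₃ ^ 2 + (-260390749/18732087 : k) * x₁ * x₃ + (2588829/693781 : k) * x₀ * x₃ + (1 : k) * x₀ ^ 2) * hF2 +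
          ((7874825/56196261 : k) * x₃ ^ 3 + (96791161/33301488 : k) * x₁ * x₃ ^ 2 + (-4473177941/599426784 : k) * x₁ ^ 2 * x₃ + (17305065/22200992 : k) * x₁ ^ 3 + (-9253665/11100496 : k) * x₀ * x₃ ^ 2 + (-2406065/11100496 : k) * x₀ * x₁ * x₃ + (-4923915/5550248 : k) * x₀ * x₁ ^ 2) * hQ +
          ((13660269/44401984 : k) * x₃ ^ 2 + (22437983/199808928 : k) * x₁ * x₃ + (-203804141/1198853568 : k) * x₁ ^ 2 + (4570711/56196261 : k) * x₀ * x₃ + (5360477/8325372 : k) * x₀ * x₁ + (3876775/11100496 : k) * x₀ ^ 2) * hm01 +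
          ((-3325864/18732087 : k) * x₁ * x₃ + (-260390749/149856696 : k) * x₁ ^ 2 + (1641305/2775124 : k) * x₀ * x₁) * hm03 +
          ((4784669111/3596560704 : k) * x₃ ^ 2 + (22437983/66602976 : k) * x₁ * x₃ + (5768355/44401984 : k) * x₁ ^ 2 + (-323435/693781 : k) * x₀ * x₃ + (-15507461/18732087 : k) * x₀ * x₁ + (3444655/1009136 : k) * x₀ ^ 2) * hm13
      have hx₁5 : x₁ ^ 5 = 0 := by
        linear_combination
          ((-84671998/580694697 : k) * x₃ ^ 2 + (-5826539929/1161389394 : k) * x₁ * x₃ + (93974841/43014422 : k) * x₀ * x₃) * hF2 +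
          ((84671998/1742084091 : k) * x₃ ^ 3 + (2973953033/4129384512 : k) * x₁ * x₃ ^ 2 + (-345890503813/74328921216 : k) * x₁ ^ 2 * x₃ + (-2777061575/2752923008 : k) * x₁ ^ 3 + (-525672897/1376461504 : k) * x₀ * x₃ ^ 2 + (-108666321/1376461504 : k) * x₀ * x₁ * x₃ + (-281924523/688230752 : k) * x₀ * x₁ ^ 2) * hQ +
          ((1430176221/5505846016 : k) * x₃ ^ 2 + (3321464719/24776307072 : k) * x₁ * x₃ + (-7979721733/148657842432 : k) * x₁ ^ 2 + (538971751/13936672728 : k) * x₀ * x₃ + (87433585/1032346128 : k) * x₀ * x₁ + (226125831/1376461504 : k) * x₀ ^ 2) * hm01 +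
          ((-42335999/2322778788 : k) * x₁ * x₃ + (-5826539929/9291115152 : k) * x₁ ^ 2 + (93974841/344115376 : k) * x₀ * x₁) * hm03 +
          ((323876645383/445973527296 : k) * x₃ ^ 2 + (3321464719/8258769024 : k) * x₁ * x₃ + (-8046189/5505846016 : k) * x₁ ^ 2 + (7417917/172057688 : k) * x₀ * x₃ + (-1314630305/4645557576 : k) * x₀ * x₁ + (198361359/125132864 : k) * x₀ ^ 2) * hm13
      have hx₃5 : x₃ ^ 5 = 0 := by
        linear_combination
          ((776012626/580694697 : k) * x₃ ^ 2 + (38142202759/1161389394 : k) * x₁ * x₃ + (-490157991/43014422 : k) * x₀ * x₃) * hF2 +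
          ((-195317929/1742084091 : k) * x₃ ^ 3 + (-28707043031/4129384512 : k) * x₁ * x₃ ^ 2 + (1409012907739/74328921216 : k) * x₁ ^ 2 * x₃ + (-3919080999/2752923008 : k) * x₁ ^ 3 + (2777640351/1376461504 : k) * x₀ * x₃ ^ 2 + (817478799/1376461504 : k) * x₀ * x₁ * x₃ + (1470473973/688230752 : k) * x₀ * x₁ ^ 2) * hQ +
          ((-7352134659/5505846016 : k) * x₃ ^ 2 + (-8008679185/24776307072 : k) * x₁ * x₃ + (70727533915/148657842432 : k) * x₁ ^ 2 + (-2003249137/13936672728 : k) * x₀ * x₃ + (-1442401903/1032346128 : k) * x₀ * x₁ + (-1143623577/1376461504 : k) * x₀ ^ 2) * hm01 +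
          ((388006313/2322778788 : k) * x₁ * x₃ + (38142202759/9291115152 : k) * x₁ ^ 2 + (-490157991/344115376 : k) * x₀ * x₁) * hm03 +
          ((-1460374708633/445973527296 : k) * x₃ ^ 2 + (-8008679185/8258769024 : k) * x₁ * x₃ + (-1306360333/5505846016 : k) * x₁ ^ 2 + (40770421/172057688 : k) * x₀ * x₃ + (10495224959/4645557576 : k) * x₀ * x₁ + (-1024854417/125132864 : k) * x₀ ^ 2) * hm13
      have hx₀ : x₀ = 0 := pow_eq_zero_iff (by norm_num : (5 : ℕ) ≠ 0) |>.mp hx₀5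
      have hx₁ : x₁ = 0 := pow_eq_zero_iff (by norm_num : (5 : ℕ) ≠ 0) |>.mp hx₁5
      have hx₃ : x₃ = 0 := pow_eq_zero_iff (by norm_num : (5 : ℕ) ≠ 0) |>.mp hx₃5
      exact hx ⟨hx₀, hx₁, hx₂, hx₃⟩
  have h := hli.rank_matrix
  rw [Fintype.card_fin] at h
  exact h
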